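/- For all nonnegative integers m and for s \le 3, S(m,m+s) = \binom{2m}{m}\binom{2s}{s} - \binom{2m}{m-1}\binom{2s}{s+2} - \binom{2m}{m+1}\binom{2s}{s-2}, where S(m,n) = (2m)!(2n)!/(m! n! (m+n)!) and binomial coefficients with out-of-range arguments are 0. -/

import Mathlib

/-- Binomial coefficient with an integer lower argument: `0` when the lower
argument is negative (and, via `Nat.choose`, `0` when it exceeds the top). -/
def ichoose (a : ℕ) (b : ℤ) : ℤ := if 0 ≤ b then (a.choose b.toNat : ℤ) else 0

/-- Super Catalan number `S(m,n) = (2m)!(2n)!/(m! n! (m+n)!)`. -/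
def superCatalan (m n : ℕ) : ℕ :=
  (Nat.factorial (2 * m) * Nat.factorial (2 * n)) /
    (Nat.factorial m * Nat.factorial n * Nat.factorial (m + n))

lemma hcat (m : ℕ) :
    (m + 1) * catalan m * (m.factorial * m.factorial) = (2 * m).factorial := by
  have h1 := succ_mul_catalan_eq_centralBinom m
  rw [Nat.centralBinom_eq_two_mul_choose] at h1
  have h2 := Nat.choose_mul_factorial_mul_factorial (show m ≤ 2 * m by omega)
  have e : 2 * m - m = m := by omega
  rw [e] at h2
  calc (m + 1) * catalan m * (m.factorial * m.factorial)
      = (2 * m).choose m * m.factorial * m.factorial := by rw [h1]; ring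
    _ = (2 * m).factorial := h2

lemma chm (m : ℕ) : (2 * m).choose m = (m + 1) * catalan m := by
  rw [← Nat.centralBinom_eq_two_mul_choose, ← succ_mul_catalan_eq_centralBinom]

lemma chm1 (m : ℕ) : (2 * m).choose (m + 1) = m * catalan m := by
  have h := Nat.choose_succ_right_eq (2 * m) m
  have e : 2 * m - m = m := by omega
  rw [e, chm] at h
  have h2 : (2 * m).choose (m + 1) * (m + 1) = m * catalan m * (m + 1) := by
    rw [h]; ring
  exact Nat.eq_of_mul_eq_mul_right (Nat.succ_pos m) h2

lemma ich_pred (m : ℕ) : ichoose (2 * m) ((m : ℤ) - 1) = (m * catalan m : ℕ) := by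
  cases m with
  | zero => simp [ichoose]
  | succ k =>
      rw [ichoose, if_pos (by push_cast; omega)]
      have e : (((k + 1 : ℕ) : ℤ) - 1).toNat = k := by omega
      rw [e]
      have hsym : (2 * (k + 1)).choose (2 * (k + 1) - (k + 2)) =
          (2 * (k + 1)).choose (k + 2) := Nat.choose_symm (by omega)
      have e2 : 2 * (k + 1) - (k + 2) = k := by omega
      rw [e2] at hsym
      rw [hsym]
      have := chm1 (k + 1)
      norm_num at this ⊢
      rw [show k + 1 + 1 = k + 2 from rfl] at this
      rw [this]
      push_cast
      ring

lemma sc0 (m : ℕ) : superCatalan m (m + 0) = (m + 1) * catalan m := by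
  unfold superCatalan
  apply Nat.div_eq_of_eq_mul_left
  · exact Nat.mul_pos (Nat.mul_pos m.factorial_pos (m + 0).factorial_pos)
      (m + (m + 0)).factorial_pos
  · rw [show m + 0 = m from rfl, show m + m = 2 * m by ring, ← hcat m]; ring

lemma sc1 (m : ℕ) : superCatalan m (m + 1) = 2 * (m + 1) * catalan m := by
  unfold superCatalan
  apply Nat.div_eq_of_eq_mul_left
  · exact Nat.mul_pos (Nat.mul_pos m.factorial_pos (m + 1).factorial_pos)
      (m + (m + 1)).factorial_pos
  · have e1 : (2 * (m + 1)).factorial = (2 * m + 2) * ((2 * m + 1) * (2 * m).factorial) := by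
      rw [show 2 * (m + 1) = (2 * m + 1) + 1 by ring, Nat.factorial_succ, Nat.factorial_succ]
    have e2 : (m + (m + 1)).factorial = (2 * m + 1) * (2 * m).factorial := by
      rw [show m + (m + 1) = (2 * m) + 1 by ring, Nat.factorial_succ]
    rw [e1, e2, Nat.factorial_succ, ← hcat m]; ring

lemma sc2 (m : ℕ) : superCatalan m (m + 2) = 2 * (2 * m + 3) * catalan m := by
  unfold superCatalan
  apply Nat.div_eq_of_eq_mul_left
  · exact Nat.mul_pos (Nat.mul_pos m.factorial_pos (m + 2).factorial_pos)
      (m + (m + 2)).factorial_pos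
  · have e1 : (2 * (m + 2)).factorial =
        (2 * m + 4) * ((2 * m + 3) * ((2 * m + 2) * ((2 * m + 1) * (2 * m).factorial))) := by
      rw [show 2 * (m + 2) = (2 * m + 3) + 1 by ring, Nat.factorial_succ,
        show 2 * m + 3 = (2 * m + 2) + 1 by ring, Nat.factorial_succ,
        show 2 * m + 2 = (2 * m + 1) + 1 by ring, Nat.factorial_succ, Nat.factorial_succ]
    have e2 : (m + (m + 2)).factorial = (2 * m + 2) * ((2 * m + 1) * (2 * m).factorial) := by
      rw [show m + (m + 2) = (2 * m + 1) + 1 by ring, Nat.factorial_succ, Nat.factorial_succ]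
    have e3 : (m + 2).factorial = (m + 2) * ((m + 1) * m.factorial) := by
      rw [show m + 2 = (m + 1) + 1 from rfl, Nat.factorial_succ, Nat.factorial_succ]
    rw [e1, e2, e3, ← hcat m]; ring

lemma sc3 (m : ℕ) : superCatalan m (m + 3) = 4 * (2 * m + 5) * catalan m := by
  unfold superCatalan
  apply Nat.div_eq_of_eq_mul_left
  · exact Nat.mul_pos (Nat.mul_pos m.factorial_pos (m + 3).factorial_pos)
      (m + (m + 3)).factorial_pos
  · have e1 : (2 * (m + 3)).factorial =
        (2 * m + 6) * ((2 * m + 5) * ((2 * m + 4) * ((2 * m + 3) *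
          ((2 * m + 2) * ((2 * m + 1) * (2 * m).factorial))))) := by
      rw [show 2 * (m + 3) = (2 * m + 5) + 1 by ring, Nat.factorial_succ,
        show 2 * m + 5 = (2 * m + 4) + 1 by ring, Nat.factorial_succ,
        show 2 * m + 4 = (2 * m + 3) + 1 by ring, Nat.factorial_succ,
        show 2 * m + 3 = (2 * m + 2) + 1 by ring, Nat.factorial_succ,
        show 2 * m + 2 = (2 * m + 1) + 1 by ring, Nat.factorial_succ, Nat.factorial_succ]
    have e2 : (m + (m + 3)).factorial =
        (2 * m + 3) * ((2 * m + 2) * ((2 * m + 1) * (2 * m).factorial)) := by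
      rw [show m + (m + 3) = (2 * m + 2) + 1 by ring, Nat.factorial_succ,
        show 2 * m + 2 = (2 * m + 1) + 1 by ring, Nat.factorial_succ, Nat.factorial_succ]
    have e3 : (m + 3).factorial = (m + 3) * ((m + 2) * ((m + 1) * m.factorial)) := by
      rw [show m + 3 = (m + 2) + 1 from rfl, Nat.factorial_succ,
        show m + 2 = (m + 1) + 1 from rfl, Nat.factorial_succ, Nat.factorial_succ]
    rw [e1, e2, e3, ← hcat m]; ring

/-- For `s ≤ 3`,
`S(m, m+s) = C(2m,m) C(2s,s) - C(2m,m-1) C(2s,s+2) - C(2m,m+1) C(2s,s-2)`. -/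
theorem superCatalan_three_terms (m s : ℕ) (hs : s ≤ 3) :
    (superCatalan m (m + s) : ℤ) =
      ichoose (2 * m) (m : ℤ) * ichoose (2 * s) (s : ℤ)
        - ichoose (2 * m) ((m : ℤ) - 1) * ichoose (2 * s) ((s : ℤ) + 2)
        - ichoose (2 * m) ((m : ℤ) + 1) * ichoose (2 * s) ((s : ℤ) - 2) := by
  have h0 : ichoose (2 * m) (m : ℤ) = ((m + 1) * catalan m : ℕ) := by
    rw [ichoose, if_pos (by positivity)]
    norm_num [chm]
  have h1 : ichoose (2 * m) ((m : ℤ) + 1) = (m * catalan m : ℕ) := by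
    rw [ichoose, if_pos (by positivity)]
    have e : ((m : ℤ) + 1).toNat = m + 1 := by omega
    rw [e, chm1]
  have h2 := ich_pred m
  interval_cases s <;>
    simp only [sc0, sc1, sc2, sc3, h0, h1, h2] <;>
    norm_num [ichoose, Nat.choose] <;> push_cast <;>
    simp only [show Nat.choose 0 2 = 0 by decide, show Nat.choose 2 3 = 0 by decide,
      show Nat.choose 4 2 = 6 by decide, show Nat.choose 4 4 = 1 by decide,
      show Nat.choose 6 3 = 20 by decide, show Nat.choose 6 5 = 6 by decide] <;> push_cast <;> ring
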